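/- O_f is the tightest octagon containing S, in the following sense: for all signs s, s' ∈ {−1, +1}, all coordinates α, β ∈ {1,…,m+n}, and every real constant c, if every point p of S satisfies s·p_α + s'·p_β ≤ c, then every point q of O_f satisfies s·q_α + s'·q_β ≤ c. -/

import Mathlib

lemma sum_ne_eq {m : ℕ} (f g : Fin m → ℝ) (j : Fin m) (h : ∀ k, k ≠ j → f k = g k) :
    ∑ k, f k = ∑ k, g k + (f j - g j) := by
  have h2 : ∑ k, (f k - g k) = f j - g j :=
    Finset.sum_eq_single j (fun k _ hk => by rw [h k hk]; ring)
      (fun h' => absurd (Finset.mem_univ j) h')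
  have h3 : ∑ k, (f k - g k) = ∑ k, f k - ∑ k, g k := Finset.sum_sub_distrib f g
  linarith

set_option maxHeartbeats 1000000


theorem octagon_tightest (m n : ℕ) (hm : 1 ≤ m) (hn : 1 ≤ n)
    (w : Fin n → Fin m → ℝ) (b : Fin n → ℝ)
    (xl xu : Fin m → ℝ) (hbounds : ∀ j, xl j ≤ xu j)
    (mlow Mup : Fin n → ℝ)
    (hmlow : ∀ i, mlow i = b i + ∑ j, w i j * (if w i j < 0 then xu j else xl j))
    (hMup : ∀ i, Mup i = b i + ∑ j, w i j * (if w i j < 0 then xl j else xu j))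
    (Delta : Fin n → Fin n → ℝ) (delta : Fin n → Fin m → ℝ)
    (hDelta : ∀ i₁ i₂, Delta i₁ i₂ = (b i₁ - b i₂) +
        ∑ j, (w i₁ j - w i₂ j) * (if w i₁ j < w i₂ j then xl j else xu j))
    (hdelta : ∀ i j, delta i j = if w i j ≤ 0 then 0
        else if w i j ≤ 1 then w i j * (xu j - xl j) else xu j - xl j)
    (Gam Lo : Fin n → Fin n → ℝ) (gam : Fin n → Fin m → ℝ)
    (hGam : ∀ i₁ i₂, Gam i₁ i₂ = (b i₁ + b i₂) +
        ∑ j, (w i₁ j + w i₂ j) * (if w i₁ j + w i₂ j < 0 then xl j else xu j))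
    (hLo : ∀ i₁ i₂, Lo i₁ i₂ = (b i₁ + b i₂) +
        ∑ j, (w i₁ j + w i₂ j) * (if w i₁ j + w i₂ j < 0 then xu j else xl j))
    (hgam : ∀ i j, gam i j = if 0 ≤ w i j then 0
        else if (-1 : ℝ) ≤ w i j then -(w i j) * (xu j - xl j) else xu j - xl j) :
    ∀ (s s' : ℝ), (s = 1 ∨ s = -1) → (s' = 1 ∨ s' = -1) →
    ∀ (a be : Fin m ⊕ Fin n) (cst : ℝ),
      (∀ x : Fin m → ℝ, (∀ j, xl j ≤ x j ∧ x j ≤ xu j) →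
        s * Sum.elim x (fun i => ∑ j, w i j * x j + b i) a
          + s' * Sum.elim x (fun i => ∑ j, w i j * x j + b i) be ≤ cst) →
      ∀ (x : Fin m → ℝ) (y : Fin n → ℝ),
        ((∀ j, xl j ≤ x j ∧ x j ≤ xu j) ∧
        (∀ i, mlow i ≤ y i ∧ y i ≤ Mup i) ∧
        (∀ i₁ i₂, y i₁ - y i₂ ≤ Delta i₁ i₂) ∧
        (∀ i j, mlow i - xu j + delta i j ≤ y i - x j ∧
          y i - x j ≤ Mup i - xl j - delta i j) ∧
        (∀ i₁ i₂, Lo i₁ i₂ ≤ y i₁ + y i₂ ∧ y i₁ + y i₂ ≤ Gam i₁ i₂) ∧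
        (∀ i j, mlow i + xl j + gam i j ≤ y i + x j ∧
          y i + x j ≤ Mup i + xu j - gam i j)) →
        s * Sum.elim x y a + s' * Sum.elim x y be ≤ cst := by
  intro s s' hs hs' a be cst hyp x y hoct
  obtain ⟨hbox, hmM, hD, hdel, hLG, hg⟩ := hoct
  -- mixed helpers
  have H1 : ∀ (i : Fin n) (j : Fin m), ∃ xs : Fin m → ℝ,
      (∀ k, xl k ≤ xs k ∧ xs k ≤ xu k) ∧
      y i + x j ≤ (∑ k, w i k * xs k + b i) + xs j := by
    intro i j
    refine ⟨fun k => if k = j then (if w i j + 1 < 0 then xl j else xu j)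
        else (if w i k < 0 then xl k else xu k), ?_, ?_⟩
    · intro k
      by_cases hk : k = j
      · simp only [if_pos hk]; rw [hk]
        split_ifs
        · exact ⟨le_refl _, hbounds _⟩
        · exact ⟨hbounds _, le_refl _⟩
      · simp only [if_neg hk]
        split_ifs
        · exact ⟨le_refl _, hbounds _⟩
        · exact ⟨hbounds _, le_refl _⟩
    · have hsum := sum_ne_eq
        (fun k => w i k * (if k = j then (if w i j + 1 < 0 then xl j else xu j)
          else (if w i k < 0 then xl k else xu k)))
        (fun k => w i k * (if w i k < 0 then xl k else xu k)) j
        (fun k hk => by simp only [if_neg hk])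
      have hcon := (hg i j).2
      have hMv := hMup i
      have hgv := hgam i j
      have hjj : j = j := rfl
      simp only [if_pos hjj] at hsum ⊢
      rw [hsum]
      rw [hMv, hgv] at hcon
      split_ifs at hcon ⊢ <;> first | linarith | nlinarith [hbounds j]
  have H2 : ∀ (i : Fin n) (j : Fin m), ∃ xs : Fin m → ℝ,
      (∀ k, xl k ≤ xs k ∧ xs k ≤ xu k) ∧
      y i - x j ≤ (∑ k, w i k * xs k + b i) - xs j := by
    intro i j
    refine ⟨fun k => if k = j then (if 1 < w i j then xu j else xl j)
        else (if w i k < 0 then xl k else xu k), ?_, ?_⟩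
    · intro k
      by_cases hk : k = j
      · simp only [if_pos hk]; rw [hk]
        split_ifs
        · exact ⟨hbounds _, le_refl _⟩
        · exact ⟨le_refl _, hbounds _⟩
      · simp only [if_neg hk]
        split_ifs
        · exact ⟨le_refl _, hbounds _⟩
        · exact ⟨hbounds _, le_refl _⟩
    · have hsum := sum_ne_eq
        (fun k => w i k * (if k = j then (if 1 < w i j then xu j else xl j)
          else (if w i k < 0 then xl k else xu k)))
        (fun k => w i k * (if w i k < 0 then xl k else xu k)) j
        (fun k hk => by simp only [if_neg hk])
      have hcon := (hdel i j).2
      have hMv := hMup i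
      have hdv := hdelta i j
      have hjj : j = j := rfl
      simp only [if_pos hjj] at hsum ⊢
      rw [hsum]
      rw [hMv, hdv] at hcon
      split_ifs at hcon ⊢ <;> first | linarith | nlinarith [hbounds j]
  have H3 : ∀ (i : Fin n) (j : Fin m), ∃ xs : Fin m → ℝ,
      (∀ k, xl k ≤ xs k ∧ xs k ≤ xu k) ∧
      x j - y i ≤ xs j - (∑ k, w i k * xs k + b i) := by
    intro i j
    refine ⟨fun k => if k = j then (if w i j < 1 then xu j else xl j)
        else (if w i k < 0 then xu k else xl k), ?_, ?_⟩
    · intro k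
      by_cases hk : k = j
      · simp only [if_pos hk]; rw [hk]
        split_ifs
        · exact ⟨hbounds _, le_refl _⟩
        · exact ⟨le_refl _, hbounds _⟩
      · simp only [if_neg hk]
        split_ifs
        · exact ⟨hbounds _, le_refl _⟩
        · exact ⟨le_refl _, hbounds _⟩
    · have hsum := sum_ne_eq
        (fun k => w i k * (if k = j then (if w i j < 1 then xu j else xl j)
          else (if w i k < 0 then xu k else xl k)))
        (fun k => w i k * (if w i k < 0 then xu k else xl k)) j
        (fun k hk => by simp only [if_neg hk])
      have hcon := (hdel i j).1
      have hmv := hmlow i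
      have hdv := hdelta i j
      have hjj : j = j := rfl
      simp only [if_pos hjj] at hsum ⊢
      rw [hsum]
      rw [hmv, hdv] at hcon
      split_ifs at hcon ⊢ <;> first | linarith | nlinarith [hbounds j]
  have H4 : ∀ (i : Fin n) (j : Fin m), ∃ xs : Fin m → ℝ,
      (∀ k, xl k ≤ xs k ∧ xs k ≤ xu k) ∧
      -(y i) - x j ≤ -(∑ k, w i k * xs k + b i) - xs j := by
    intro i j
    refine ⟨fun k => if k = j then (if w i j + 1 < 0 then xu j else xl j)
        else (if w i k < 0 then xu k else xl k), ?_, ?_⟩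
    · intro k
      by_cases hk : k = j
      · simp only [if_pos hk]; rw [hk]
        split_ifs
        · exact ⟨hbounds _, le_refl _⟩
        · exact ⟨le_refl _, hbounds _⟩
      · simp only [if_neg hk]
        split_ifs
        · exact ⟨hbounds _, le_refl _⟩
        · exact ⟨le_refl _, hbounds _⟩
    · have hsum := sum_ne_eq
        (fun k => w i k * (if k = j then (if w i j + 1 < 0 then xu j else xl j)
          else (if w i k < 0 then xu k else xl k)))
        (fun k => w i k * (if w i k < 0 then xu k else xl k)) j
        (fun k hk => by simp only [if_neg hk])
      have hcon := (hg i j).1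
      have hmv := hmlow i
      have hgv := hgam i j
      have hjj : j = j := rfl
      simp only [if_pos hjj] at hsum ⊢
      rw [hsum]
      rw [hmv, hgv] at hcon
      split_ifs at hcon ⊢ <;> first | linarith | nlinarith [hbounds j]
  -- pure output helpers
  have P1 : ∀ i1 i2 : Fin n, ∃ xs : Fin m → ℝ,
      (∀ k, xl k ≤ xs k ∧ xs k ≤ xu k) ∧
      y i1 + y i2 ≤ (∑ k, w i1 k * xs k + b i1) + (∑ k, w i2 k * xs k + b i2) := by
    intro i1 i2
    refine ⟨fun k => if w i1 k + w i2 k < 0 then xl k else xu k, ?_, ?_⟩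
    · intro k; dsimp only; split_ifs
      · exact ⟨le_refl _, hbounds _⟩
      · exact ⟨hbounds _, le_refl _⟩
    · dsimp only
      have hcon := (hLG i1 i2).2
      rw [hGam] at hcon
      have hsplit : ∑ k, (w i1 k + w i2 k) * (if w i1 k + w i2 k < 0 then xl k else xu k)
          = (∑ k, w i1 k * (if w i1 k + w i2 k < 0 then xl k else xu k))
            + ∑ k, w i2 k * (if w i1 k + w i2 k < 0 then xl k else xu k) := by
        rw [← Finset.sum_add_distrib]
        exact Finset.sum_congr rfl (fun k _ => by ring)
      linarith
  have P2 : ∀ i1 i2 : Fin n, ∃ xs : Fin m → ℝ,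
      (∀ k, xl k ≤ xs k ∧ xs k ≤ xu k) ∧
      y i1 - y i2 ≤ (∑ k, w i1 k * xs k + b i1) - (∑ k, w i2 k * xs k + b i2) := by
    intro i1 i2
    refine ⟨fun k => if w i1 k < w i2 k then xl k else xu k, ?_, ?_⟩
    · intro k; dsimp only; split_ifs
      · exact ⟨le_refl _, hbounds _⟩
      · exact ⟨hbounds _, le_refl _⟩
    · dsimp only
      have hcon := hD i1 i2
      rw [hDelta] at hcon
      have hsplit : ∑ k, (w i1 k - w i2 k) * (if w i1 k < w i2 k then xl k else xu k)
          = (∑ k, w i1 k * (if w i1 k < w i2 k then xl k else xu k))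
            - ∑ k, w i2 k * (if w i1 k < w i2 k then xl k else xu k) := by
        rw [← Finset.sum_sub_distrib]
        exact Finset.sum_congr rfl (fun k _ => by ring)
      linarith
  have P3 : ∀ i1 i2 : Fin n, ∃ xs : Fin m → ℝ,
      (∀ k, xl k ≤ xs k ∧ xs k ≤ xu k) ∧
      -(y i1) - y i2 ≤ -(∑ k, w i1 k * xs k + b i1) - (∑ k, w i2 k * xs k + b i2) := by
    intro i1 i2
    refine ⟨fun k => if w i1 k + w i2 k < 0 then xu k else xl k, ?_, ?_⟩
    · intro k; dsimp only; split_ifs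
      · exact ⟨hbounds _, le_refl _⟩
      · exact ⟨le_refl _, hbounds _⟩
    · dsimp only
      have hcon := (hLG i1 i2).1
      rw [hLo] at hcon
      have hsplit : ∑ k, (w i1 k + w i2 k) * (if w i1 k + w i2 k < 0 then xu k else xl k)
          = (∑ k, w i1 k * (if w i1 k + w i2 k < 0 then xu k else xl k))
            + ∑ k, w i2 k * (if w i1 k + w i2 k < 0 then xu k else xl k) := by
        rw [← Finset.sum_add_distrib]
        exact Finset.sum_congr rfl (fun k _ => by ring)
      linarith
  -- pure input helpers
  have Q2 : ∀ j1 j2 : Fin m, ∃ xs : Fin m → ℝ,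
      (∀ k, xl k ≤ xs k ∧ xs k ≤ xu k) ∧ x j1 - x j2 ≤ xs j1 - xs j2 := by
    intro j1 j2
    by_cases hj : j1 = j2
    · subst hj
      exact ⟨xl, fun k => ⟨le_refl _, hbounds _⟩, by linarith⟩
    · refine ⟨fun k => if k = j2 then xl k else xu k, ?_, ?_⟩
      · intro k; dsimp only; split_ifs
        · exact ⟨le_refl _, hbounds _⟩
        · exact ⟨hbounds _, le_refl _⟩
      · have hjj : j2 = j2 := rfl
        dsimp only
        simp only [if_neg hj, if_pos hjj, eq_self_iff_true, if_true]
        linarith [(hbox j1).2, (hbox j2).1]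
  -- dispatch
  rcases hs with rfl | rfl <;> rcases hs' with rfl | rfl <;>
    rcases a with j1 | i1 <;> rcases be with j2 | i2 <;>
    simp only [Sum.elim_inl, Sum.elim_inr] at hyp ⊢
  · have h := hyp xu (fun k => ⟨hbounds k, le_refl _⟩)
    linarith [(hbox j1).2, (hbox j2).2]
  · obtain ⟨xs, hmem, hle⟩ := H1 i2 j1
    have h := hyp xs hmem
    linarith
  · obtain ⟨xs, hmem, hle⟩ := H1 i1 j2
    have h := hyp xs hmem
    linarith
  · obtain ⟨xs, hmem, hle⟩ := P1 i1 i2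
    have h := hyp xs hmem
    linarith
  · obtain ⟨xs, hmem, hle⟩ := Q2 j1 j2
    have h := hyp xs hmem
    linarith
  · obtain ⟨xs, hmem, hle⟩ := H3 i2 j1
    have h := hyp xs hmem
    linarith
  · obtain ⟨xs, hmem, hle⟩ := H2 i1 j2
    have h := hyp xs hmem
    linarith
  · obtain ⟨xs, hmem, hle⟩ := P2 i1 i2
    have h := hyp xs hmem
    linarith
  · obtain ⟨xs, hmem, hle⟩ := Q2 j2 j1
    have h := hyp xs hmem
    linarith
  · obtain ⟨xs, hmem, hle⟩ := H2 i2 j1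
    have h := hyp xs hmem
    linarith
  · obtain ⟨xs, hmem, hle⟩ := H3 i1 j2
    have h := hyp xs hmem
    linarith
  · obtain ⟨xs, hmem, hle⟩ := P2 i2 i1
    have h := hyp xs hmem
    linarith
  · have h := hyp xl (fun k => ⟨le_refl _, hbounds k⟩)
    linarith [(hbox j1).1, (hbox j2).1]
  · obtain ⟨xs, hmem, hle⟩ := H4 i2 j1
    have h := hyp xs hmem
    linarith
  · obtain ⟨xs, hmem, hle⟩ := H4 i1 j2
    have h := hyp xs hmem
    linarith
  · obtain ⟨xs, hmem, hle⟩ := P3 i1 i2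
    have h := hyp xs hmem
    linarith
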